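/- Let G and H be finite simple graphs with no isolated vertices, and let K = G ∨ H be the join of G and H. Then K admits a barbell partition if and only if G or H admits a barbell partition {R, W1, W2} with |W1| ≥ 2 and |W2| ≥ 2. -/

import Mathlib

open SimpleGraph

/-- A barbell partition of a graph `G`: a partition of the vertex set into
`R`, `W1`, `W2` with `W1, W2` nonempty, no edges between `W1` and `W2`, and
every vertex of `R` has a number of neighbors in each `Wi` different from 1. -/
def IsBarbellPartition {V : Type*} (G : SimpleGraph V) (R W1 W2 : Set V) : Prop :=
  R ∪ W1 ∪ W2 = Set.univ ∧ Disjoint R W1 ∧ Disjoint R W2 ∧ Disjoint W1 W2 ∧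
  W1.Nonempty ∧ W2.Nonempty ∧
  (∀ w1 ∈ W1, ∀ w2 ∈ W2, ¬ G.Adj w1 w2) ∧
  (∀ v ∈ R, (G.neighborSet v ∩ W1).ncard ≠ 1 ∧ (G.neighborSet v ∩ W2).ncard ≠ 1)

/-- `G` admits a barbell partition. -/
def HasBarbellPartition {V : Type*} (G : SimpleGraph V) : Prop :=
  ∃ R W1 W2 : Set V, IsBarbellPartition G R W1 W2

/-- A fort of `G`: a nonempty vertex set `F` such that no vertex outside `F`
has exactly one neighbor in `F`. -/
def IsFort {V : Type*} (G : SimpleGraph V) (F : Set V) : Prop :=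
  F.Nonempty ∧ ∀ v ∉ F, (G.neighborSet v ∩ F).ncard ≠ 1

/-- The join of two graphs: all of `G`, all of `H`, and every edge in between. -/
def joinGraph {α β : Type*} (G : SimpleGraph α) (H : SimpleGraph β) :
    SimpleGraph (α ⊕ β) where
  Adj x y :=
    match x, y with
    | Sum.inl a, Sum.inl b => G.Adj a b
    | Sum.inr a, Sum.inr b => H.Adj a b
    | Sum.inl _, Sum.inr _ => True
    | Sum.inr _, Sum.inl _ => True
  symm := ⟨by
    rintro (a | a) (b | b) h
    · exact h.symm
    · trivial
    · trivial
    · exact h.symm⟩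
  loopless := ⟨by
    rintro (a | a) h
    · exact G.irrefl h
    · exact H.irrefl h⟩

section helpers
variable {α β : Type*} {G : SimpleGraph α} {H : SimpleGraph β}

lemma joinAdj_lr {a : α} {b : β} : (joinGraph G H).Adj (Sum.inl a) (Sum.inr b) := trivial
lemma joinAdj_rl {a : α} {b : β} : (joinGraph G H).Adj (Sum.inr b) (Sum.inl a) := trivial

lemma nb_ll (a : α) (A : Set α) :
    (joinGraph G H).neighborSet (Sum.inl a) ∩ (Sum.inl '' A) =
      Sum.inl '' (G.neighborSet a ∩ A) := by
  ext x
  rcases x with c | c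
  · simp only [Set.mem_inter_iff, mem_neighborSet, Set.mem_image, Sum.inl.injEq,
      exists_eq_right]
    exact Iff.rfl
  · simp

lemma nb_rl (b : β) (A : Set α) :
    (joinGraph G H).neighborSet (Sum.inr b) ∩ (Sum.inl '' A) = Sum.inl '' A := by
  ext x
  rcases x with c | c
  · simp only [Set.mem_inter_iff, mem_neighborSet, Set.mem_image, Sum.inl.injEq,
      exists_eq_right]
    exact and_iff_right joinAdj_rl
  · simp

lemma nb_rr (b : β) (B : Set β) :
    (joinGraph G H).neighborSet (Sum.inr b) ∩ (Sum.inr '' B) =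
      Sum.inr '' (H.neighborSet b ∩ B) := by
  ext x
  rcases x with c | c
  · simp
  · simp only [Set.mem_inter_iff, mem_neighborSet, Set.mem_image, Sum.inr.injEq,
      exists_eq_right]
    exact Iff.rfl

lemma nb_lr (a : α) (B : Set β) :
    (joinGraph G H).neighborSet (Sum.inl a) ∩ (Sum.inr '' B) = Sum.inr '' B := by
  ext x
  rcases x with c | c
  · simp
  · simp only [Set.mem_inter_iff, mem_neighborSet, Set.mem_image, Sum.inr.injEq,
      exists_eq_right]
    exact and_iff_right joinAdj_lr

end helpers

/-- For graphs `G, H` with no isolated vertices, the join `G ∨ H` admits a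
barbell partition iff `G` or `H` admits a barbell partition whose parts
`W1, W2` each have at least two vertices. -/
theorem joinGraph_hasBarbellPartition_iff {α β : Type*} [Fintype α] [Fintype β]
    (G : SimpleGraph α) (H : SimpleGraph β)
    (hG : ∀ a : α, (G.neighborSet a).Nonempty)
    (hH : ∀ b : β, (H.neighborSet b).Nonempty) :
    HasBarbellPartition (joinGraph G H) ↔
      ((∃ R W1 W2 : Set α, IsBarbellPartition G R W1 W2 ∧
          2 ≤ W1.ncard ∧ 2 ≤ W2.ncard) ∨
       (∃ R W1 W2 : Set β, IsBarbellPartition H R W1 W2 ∧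
          2 ≤ W1.ncard ∧ 2 ≤ W2.ncard)) := by
  constructor
  · rintro ⟨R, W1, W2, hcov, hRW1, hRW2, hW12, hW1ne, hW2ne, hedge, hdeg⟩
    have hmem : ∀ v : α ⊕ β, v ∈ R ∪ W1 ∪ W2 := by
      intro v; rw [hcov]; trivial
    obtain ⟨x, hx⟩ := hW1ne
    rcases x with a | b
    · -- W1, W2 live on the α side
      left
      obtain ⟨y, hy⟩ := hW2ne
      have hW2l : ∀ y ∈ W2, ∃ c, y = Sum.inl c := by
        rintro (c | c) hy'
        · exact ⟨c, rfl⟩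
        · exact absurd joinAdj_lr (hedge _ hx _ hy')
      obtain ⟨a2, rfl⟩ := hW2l y hy
      have hW1l : ∀ y ∈ W1, ∃ c, y = Sum.inl c := by
        rintro (c | c) hy'
        · exact ⟨c, rfl⟩
        · exact absurd joinAdj_rl (hedge _ hy' _ hy)
      set A1 : Set α := Sum.inl ⁻¹' W1 with hA1def
      set A2 : Set α := Sum.inl ⁻¹' W2 with hA2def
      set RA : Set α := Sum.inl ⁻¹' R with hRAdef
      have hW1e : Sum.inl '' A1 = W1 := by
        apply Set.image_preimage_eq_of_subset
        rintro z hz; obtain ⟨c, rfl⟩ := hW1l z hz; exact ⟨c, rfl⟩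
      have hW2e : Sum.inl '' A2 = W2 := by
        apply Set.image_preimage_eq_of_subset
        rintro z hz; obtain ⟨c, rfl⟩ := hW2l z hz; exact ⟨c, rfl⟩
      -- sizes
      have hsize : ∀ A : Set α, Sum.inl '' A = W1 ∨ Sum.inl '' A = W2 → A.Nonempty →
          2 ≤ A.ncard := by
        intro A hAW hAne
        have hne1 : A.ncard ≠ 1 := by
          intro h1
          obtain ⟨w, rfl⟩ := Set.ncard_eq_one.mp h1
          obtain ⟨u, hu⟩ := hG w
          have hadj : (joinGraph G H).Adj (Sum.inl w) (Sum.inl u) := hu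
          have huw : (Sum.inl u : α ⊕ β) ≠ Sum.inl w := by
            intro h
            rw [Sum.inl.injEq] at h
            exact G.irrefl (v := w) (h ▸ hu)
          have huW1 : Sum.inl u ∉ W1 := by
            intro h'
            rcases hAW with h | h
            · rw [← h, Set.image_singleton, Set.mem_singleton_iff] at h'
              exact huw h'
            · have hwW2 : Sum.inl w ∈ W2 := by
                rw [← h, Set.image_singleton]; rfl
              exact hedge _ h' _ hwW2 hadj.symm
          have huW2 : Sum.inl u ∉ W2 := by
            intro h'
            rcases hAW with h | h
            · have hwW1 : Sum.inl w ∈ W1 := by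
                rw [← h, Set.image_singleton]; rfl
              exact hedge _ hwW1 _ h' hadj
            · rw [← h, Set.image_singleton, Set.mem_singleton_iff] at h'
              exact huw h'
          have huR : Sum.inl u ∈ R := by
            rcases hmem (Sum.inl u) with (h | h) | h
            · exact h
            · exact absurd h huW1
            · exact absurd h huW2
          have hd := hdeg _ huR
          have hcalc : ((joinGraph G H).neighborSet (Sum.inl u) ∩ Sum.inl '' {w}).ncard = 1 := by
            rw [nb_ll, Set.ncard_image_of_injective _ Sum.inl_injective]
            have : G.neighborSet u ∩ {w} = {w} := by
              apply Set.inter_eq_self_of_subset_right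
              simpa using hu.symm
            rw [this, Set.ncard_singleton]
          rcases hAW with h | h
          · exact hd.1 (h ▸ hcalc)
          · exact hd.2 (h ▸ hcalc)
        have hne0 : A.ncard ≠ 0 := by
          have := (Set.ncard_pos A.toFinite).mpr hAne
          omega
        omega
      have hA1ne : A1.Nonempty := ⟨a, hx⟩
      have hA2ne : A2.Nonempty := ⟨a2, hy⟩
      refine ⟨RA, A1, A2, ⟨?_, ?_, ?_, ?_, hA1ne, hA2ne, ?_, ?_⟩,
        hsize A1 (Or.inl hW1e) hA1ne, hsize A2 (Or.inr hW2e) hA2ne⟩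
      · have : RA ∪ A1 ∪ A2 = Sum.inl ⁻¹' (R ∪ W1 ∪ W2) := by
          simp [hRAdef, hA1def, hA2def, Set.preimage_union]
        rw [this, hcov, Set.preimage_univ]
      · exact hRW1.preimage _
      · exact hRW2.preimage _
      · exact hW12.preimage _
      · intro w1 hw1 w2 hw2 hadj
        exact hedge _ hw1 _ hw2 hadj
      · intro v hv
        have hd := hdeg _ hv
        rw [← hW1e, ← hW2e, nb_ll, nb_ll,
          Set.ncard_image_of_injective _ Sum.inl_injective,
          Set.ncard_image_of_injective _ Sum.inl_injective] at hd
        exact hd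
    · -- W1, W2 live on the β side
      right
      obtain ⟨y, hy⟩ := hW2ne
      have hW2l : ∀ y ∈ W2, ∃ c, y = Sum.inr c := by
        rintro (c | c) hy'
        · exact absurd joinAdj_rl (hedge _ hx _ hy')
        · exact ⟨c, rfl⟩
      obtain ⟨b2, rfl⟩ := hW2l y hy
      have hW1l : ∀ y ∈ W1, ∃ c, y = Sum.inr c := by
        rintro (c | c) hy'
        · exact absurd joinAdj_lr (hedge _ hy' _ hy)
        · exact ⟨c, rfl⟩
      set A1 : Set β := Sum.inr ⁻¹' W1 with hA1def
      set A2 : Set β := Sum.inr ⁻¹' W2 with hA2def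
      set RA : Set β := Sum.inr ⁻¹' R with hRAdef
      have hW1e : Sum.inr '' A1 = W1 := by
        apply Set.image_preimage_eq_of_subset
        rintro z hz; obtain ⟨c, rfl⟩ := hW1l z hz; exact ⟨c, rfl⟩
      have hW2e : Sum.inr '' A2 = W2 := by
        apply Set.image_preimage_eq_of_subset
        rintro z hz; obtain ⟨c, rfl⟩ := hW2l z hz; exact ⟨c, rfl⟩
      have hsize : ∀ A : Set β, Sum.inr '' A = W1 ∨ Sum.inr '' A = W2 → A.Nonempty →
          2 ≤ A.ncard := by
        intro A hAW hAne
        have hne1 : A.ncard ≠ 1 := by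
          intro h1
          obtain ⟨w, rfl⟩ := Set.ncard_eq_one.mp h1
          obtain ⟨u, hu⟩ := hH w
          have hadj : (joinGraph G H).Adj (Sum.inr w) (Sum.inr u) := hu
          have huw : (Sum.inr u : α ⊕ β) ≠ Sum.inr w := by
            intro h
            rw [Sum.inr.injEq] at h
            exact H.irrefl (v := w) (h ▸ hu)
          have huW1 : Sum.inr u ∉ W1 := by
            intro h'
            rcases hAW with h | h
            · rw [← h, Set.image_singleton, Set.mem_singleton_iff] at h'
              exact huw h'
            · have hwW2 : Sum.inr w ∈ W2 := by
                rw [← h, Set.image_singleton]; rfl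
              exact hedge _ h' _ hwW2 hadj.symm
          have huW2 : Sum.inr u ∉ W2 := by
            intro h'
            rcases hAW with h | h
            · have hwW1 : Sum.inr w ∈ W1 := by
                rw [← h, Set.image_singleton]; rfl
              exact hedge _ hwW1 _ h' hadj
            · rw [← h, Set.image_singleton, Set.mem_singleton_iff] at h'
              exact huw h'
          have huR : Sum.inr u ∈ R := by
            rcases hmem (Sum.inr u) with (h | h) | h
            · exact h
            · exact absurd h huW1
            · exact absurd h huW2
          have hd := hdeg _ huR
          have hcalc : ((joinGraph G H).neighborSet (Sum.inr u) ∩ Sum.inr '' {w}).ncard = 1 := by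
            rw [nb_rr, Set.ncard_image_of_injective _ Sum.inr_injective]
            have : H.neighborSet u ∩ {w} = {w} := by
              apply Set.inter_eq_self_of_subset_right
              simpa using hu.symm
            rw [this, Set.ncard_singleton]
          rcases hAW with h | h
          · exact hd.1 (h ▸ hcalc)
          · exact hd.2 (h ▸ hcalc)
        have hne0 : A.ncard ≠ 0 := by
          have := (Set.ncard_pos A.toFinite).mpr hAne
          omega
        omega
      have hA1ne : A1.Nonempty := ⟨b, hx⟩
      have hA2ne : A2.Nonempty := ⟨b2, hy⟩
      refine ⟨RA, A1, A2, ⟨?_, ?_, ?_, ?_, hA1ne, hA2ne, ?_, ?_⟩,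
        hsize A1 (Or.inl hW1e) hA1ne, hsize A2 (Or.inr hW2e) hA2ne⟩
      · have : RA ∪ A1 ∪ A2 = Sum.inr ⁻¹' (R ∪ W1 ∪ W2) := by
          simp [hRAdef, hA1def, hA2def, Set.preimage_union]
        rw [this, hcov, Set.preimage_univ]
      · exact hRW1.preimage _
      · exact hRW2.preimage _
      · exact hW12.preimage _
      · intro w1 hw1 w2 hw2 hadj
        exact hedge _ hw1 _ hw2 hadj
      · intro v hv
        have hd := hdeg _ hv
        rw [← hW1e, ← hW2e, nb_rr, nb_rr,
          Set.ncard_image_of_injective _ Sum.inr_injective,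
          Set.ncard_image_of_injective _ Sum.inr_injective] at hd
        exact hd
  · rintro (⟨RA, A1, A2, ⟨hcov, d1, d2, d12, hne1, hne2, hedge, hdeg⟩, hs1, hs2⟩ |
        ⟨RA, A1, A2, ⟨hcov, d1, d2, d12, hne1, hne2, hedge, hdeg⟩, hs1, hs2⟩)
    · refine ⟨Sum.inl '' RA ∪ Set.range Sum.inr, Sum.inl '' A1, Sum.inl '' A2,
        ?_, ?_, ?_, ?_, hne1.image _, hne2.image _, ?_, ?_⟩
      · ext x
        rcases x with a | b
        · simp only [Set.mem_union, Set.mem_image, Set.mem_range, Set.mem_univ, iff_true]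
          have := Set.eq_univ_iff_forall.mp hcov a
          rcases this with (h | h) | h
          · exact Or.inl (Or.inl (Or.inl ⟨a, h, rfl⟩))
          · exact Or.inl (Or.inr ⟨a, h, rfl⟩)
          · exact Or.inr ⟨a, h, rfl⟩
        · simp
      · rw [Set.disjoint_union_left]
        refine ⟨(Set.disjoint_image_iff Sum.inl_injective).mpr d1, ?_⟩
        rw [Set.disjoint_left]
        rintro _ ⟨b, rfl⟩ ⟨a, _, h⟩
        exact Sum.inl_ne_inr h
      · rw [Set.disjoint_union_left]
        refine ⟨(Set.disjoint_image_iff Sum.inl_injective).mpr d2, ?_⟩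
        rw [Set.disjoint_left]
        rintro _ ⟨b, rfl⟩ ⟨a, _, h⟩
        exact Sum.inl_ne_inr h
      · exact (Set.disjoint_image_iff Sum.inl_injective).mpr d12
      · rintro _ ⟨a1, h1, rfl⟩ _ ⟨a2, h2, rfl⟩ hadj
        exact hedge a1 h1 a2 h2 hadj
      · rintro v (⟨a, ha, rfl⟩ | ⟨b, rfl⟩)
        · rw [nb_ll, nb_ll, Set.ncard_image_of_injective _ Sum.inl_injective,
            Set.ncard_image_of_injective _ Sum.inl_injective]
          exact hdeg a ha
        · rw [nb_rl, nb_rl, Set.ncard_image_of_injective _ Sum.inl_injective,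
            Set.ncard_image_of_injective _ Sum.inl_injective]
          omega
    · refine ⟨Sum.inr '' RA ∪ Set.range Sum.inl, Sum.inr '' A1, Sum.inr '' A2,
        ?_, ?_, ?_, ?_, hne1.image _, hne2.image _, ?_, ?_⟩
      · ext x
        rcases x with a | b
        · simp
        · simp only [Set.mem_union, Set.mem_image, Set.mem_range, Set.mem_univ, iff_true]
          have := Set.eq_univ_iff_forall.mp hcov b
          rcases this with (h | h) | h
          · exact Or.inl (Or.inl (Or.inl ⟨b, h, rfl⟩))
          · exact Or.inl (Or.inr ⟨b, h, rfl⟩)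
          · exact Or.inr ⟨b, h, rfl⟩
      · rw [Set.disjoint_union_left]
        refine ⟨(Set.disjoint_image_iff Sum.inr_injective).mpr d1, ?_⟩
        rw [Set.disjoint_left]
        rintro _ ⟨b, rfl⟩ ⟨a, _, h⟩
        exact Sum.inr_ne_inl h
      · rw [Set.disjoint_union_left]
        refine ⟨(Set.disjoint_image_iff Sum.inr_injective).mpr d2, ?_⟩
        rw [Set.disjoint_left]
        rintro _ ⟨b, rfl⟩ ⟨a, _, h⟩
        exact Sum.inr_ne_inl h
      · exact (Set.disjoint_image_iff Sum.inr_injective).mpr d12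
      · rintro _ ⟨a1, h1, rfl⟩ _ ⟨a2, h2, rfl⟩ hadj
        exact hedge a1 h1 a2 h2 hadj
      · rintro v (⟨a, ha, rfl⟩ | ⟨b, rfl⟩)
        · rw [nb_rr, nb_rr, Set.ncard_image_of_injective _ Sum.inr_injective,
            Set.ncard_image_of_injective _ Sum.inr_injective]
          exact hdeg a ha
        · rw [nb_lr, nb_lr, Set.ncard_image_of_injective _ Sum.inr_injective,
            Set.ncard_image_of_injective _ Sum.inr_injective]
          omega
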